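/- Every finitely generated subgroup of GL(n, ℂ) is residually finite. -/

import Mathlib

instance : IsJacobsonRing ℤ := by
  rw [isJacobsonRing_iff_prime_eq]
  intro P hP
  rcases eq_or_ne P ⊥ with rfl | hPb
  · refine le_antisymm (fun x hx => ?_) Ideal.le_jacobson
    have := (Ideal.mem_jacobson_bot.mp hx) x
    rw [Int.isUnit_iff] at this
    rcases this with h | h
    · have : x * x = 0 := by omega
      simpa using mul_self_eq_zero.mp this
    · nlinarith [mul_self_nonneg x]
  · exact Ideal.jacobson_eq_self_of_isMaximal (H := IsPrime.to_maximal_ideal (hpi := hP) hPb)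

-- a field that is finite as ℤ-module is finite
theorem finite_of_int_module_finite (k : Type*) [Field k] [Module.Finite ℤ k] : Finite k := by
  cases CharP.char_is_prime_or_zero k (ringChar k) with
  | inl hp =>
    apply Module.finite_of_fg_torsion
    intro x
    refine ⟨⟨(ringChar k : ℤ), ?_⟩, ?_⟩
    · exact mem_nonZeroDivisors_of_ne_zero (by exact_mod_cast hp.ne_zero)
    · show (ringChar k : ℤ) • x = 0
      rw [zsmul_eq_mul]
      simp [CharP.intCast_eq_zero_iff k (ringChar k)]
  | inr h0 =>
    exfalso
    haveI : CharP k 0 := h0 ▸ ringChar.charP k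
    haveI : CharZero k := CharP.charP_to_charZero k
    have hint : IsIntegral ℤ ((1 : ℚ) / 2) := by
      have h := (Algebra.IsIntegral.of_finite ℤ k).isIntegral (algebraMap ℚ k (1/2))
      exact IsIntegral.tower_bot (algebraMap ℚ k).injective h
    obtain ⟨y, hy⟩ := IsIntegrallyClosed.isIntegral_iff.mp hint
    have : (y : ℚ) = 1 / 2 := hy
    have h2 : (2 : ℚ) * y = 1 := by rw [this]; ring
    have : (2 * y : ℤ) = 1 := by exact_mod_cast h2
    omega

theorem exists_maximal_finite_quotient (R : Type*) [CommRing R] [IsDomain R]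
    [Algebra.FiniteType ℤ R] (x : R) (hx : x ≠ 0) :
    ∃ m : Ideal R, m.IsMaximal ∧ x ∉ m ∧ Finite (R ⧸ m) := by
  haveI : IsJacobsonRing R := isJacobsonRing_of_finiteType (A := ℤ)
  have hjac : (⊥ : Ideal R).jacobson = ⊥ := by
    rw [← Ideal.radical_eq_jacobson]; exact Ideal.radical_bot_of_noZeroDivisors
  have hxj : x ∉ (⊥ : Ideal R).jacobson := by rw [hjac]; simpa using hx
  rw [Ideal.jacobson, Ideal.mem_sInf] at hxj
  push_neg at hxj
  obtain ⟨m, ⟨-, hm⟩, hxm⟩ := hxj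
  refine ⟨m, hm, hxm, ?_⟩
  haveI := hm
  letI : Field (R ⧸ m) := Ideal.Quotient.field m
  haveI : Algebra.FiniteType ℤ (R ⧸ m) :=
    Algebra.FiniteType.of_surjective
      (AlgHom.mk' (Ideal.Quotient.mk m) (fun c r => by simp))
      Ideal.Quotient.mk_surjective
  haveI : Module.Finite ℤ (R ⧸ m) := finite_of_finite_type_of_isJacobsonRing ℤ (R ⧸ m)
  exact finite_of_int_module_finite (R ⧸ m)

set_option synthInstance.maxHeartbeats 1000000 in
set_option maxHeartbeats 2000000 in
open Matrix in


/-- Malcev's theorem: every finitely generated subgroup of `GL(n, ℂ)` is residually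
finite: every nontrivial element is detected by a homomorphism to a finite group. -/
theorem fg_subgroup_of_GL_residually_finite
    (n : ℕ) (H : Subgroup (Matrix.GeneralLinearGroup (Fin n) ℂ)) (hfg : Group.FG H) :
    ∀ g : H, g ≠ 1 →
      ∃ (F : Type) (_ : Group F) (_ : Finite F) (η : H →* F), η g ≠ 1 := by
  intro g hg
  obtain ⟨S, hS⟩ := hfg.out
  -- the finite set of entries of generators and their inverses
  set T : Set ℂ := ⋃ s ∈ (S : Set H),
      (Set.range fun p : Fin n × Fin n => ((s : GL (Fin n) ℂ) : Matrix (Fin n) (Fin n) ℂ) p.1 p.2) ∪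
      (Set.range fun p : Fin n × Fin n => (((s : GL (Fin n) ℂ)⁻¹ : GL (Fin n) ℂ) : Matrix (Fin n) (Fin n) ℂ) p.1 p.2) with hT
  have hTfin : T.Finite :=
    Set.Finite.biUnion S.finite_toSet fun s _ =>
      ((Set.finite_range _).union (Set.finite_range _))
  set R : Subalgebra ℤ ℂ := Algebra.adjoin ℤ T with hR
  haveI : Algebra.FiniteType ℤ R := by
    rw [← Subalgebra.fg_iff_finiteType]
    rw [hR, ← hTfin.coe_toFinset]
    exact Subalgebra.fg_adjoin_finset _
  -- all entries of all elements of H lie in R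
  have hme : ∀ h : H, (∀ i j, ((h : GL (Fin n) ℂ) : Matrix (Fin n) (Fin n) ℂ) i j ∈ R) ∧
      (∀ i j, (((h : GL (Fin n) ℂ)⁻¹ : GL (Fin n) ℂ) : Matrix (Fin n) (Fin n) ℂ) i j ∈ R) := by
    intro h
    have hmem : h ∈ Subgroup.closure (S : Set H) := hS ▸ Subgroup.mem_top h
    induction hmem using Subgroup.closure_induction with
    | mem x hx =>
      constructor <;> intro i j <;> apply Algebra.subset_adjoin
      · exact Set.mem_biUnion hx (Or.inl ⟨(i, j), rfl⟩)
      · exact Set.mem_biUnion hx (Or.inr ⟨(i, j), rfl⟩)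
    | one =>
      refine ⟨fun i j => ?_, fun i j => ?_⟩ <;>
      · simp only [OneMemClass.coe_one, inv_one, Units.val_one, Matrix.one_apply]
        split
        · exact one_mem R
        · exact zero_mem R
    | mul x y hx hy ihx ihy =>
      constructor <;> intro i j
      · simp only [MulMemClass.coe_mul, Units.val_mul, Matrix.mul_apply]
        exact sum_mem fun k _ => mul_mem (ihx.1 i k) (ihy.1 k j)
      · simp only [MulMemClass.coe_mul, _root_.mul_inv_rev, Units.val_mul, Matrix.mul_apply]
        exact sum_mem fun k _ => mul_mem (ihy.2 i k) (ihx.2 k j)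
    | inv x hx ihx =>
      refine ⟨fun i j => ?_, fun i j => ?_⟩
      · simpa using ihx.2 i j
      · simpa using ihx.1 i j
  -- the entrywise inclusion of R-matrices into ℂ-matrices
  let f : R →+* ℂ := ((Subalgebra.val R : R →ₐ[ℤ] ℂ) : R →+* ℂ)
  have hMinj : ∀ A B : Matrix (Fin n) (Fin n) R, A.map f = B.map f → A = B := by
    intro A B hAB
    refine Matrix.ext fun i j => Subtype.ext ?_
    exact congrArg (fun M => M i j) hAB
  -- the restriction of elements of H to matrices over R, as units
  let u : H → (Matrix (Fin n) (Fin n) R)ˣ := fun h =>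
    { val := Matrix.of fun i j => (⟨_, (hme h).1 i j⟩ : R)
      inv := Matrix.of fun i j => (⟨_, (hme h).2 i j⟩ : R)
      val_inv := by
        apply hMinj
        have h1 : (Matrix.of fun i j => (⟨_, (hme h).1 i j⟩ : R)).map f
            = ((h : GL (Fin n) ℂ) : Matrix (Fin n) (Fin n) ℂ) := by ext i j; rfl
        have h2 : (Matrix.of fun i j => (⟨_, (hme h).2 i j⟩ : R)).map f
            = (((h : GL (Fin n) ℂ)⁻¹ : GL (Fin n) ℂ) : Matrix (Fin n) (Fin n) ℂ) := by
          ext i j; rfl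
        rw [Matrix.map_mul, h1, h2, Matrix.map_one f (map_zero f) (map_one f),
          ← Units.val_mul, mul_inv_cancel, Units.val_one]
      inv_val := by
        apply hMinj
        have h1 : (Matrix.of fun i j => (⟨_, (hme h).1 i j⟩ : R)).map f
            = ((h : GL (Fin n) ℂ) : Matrix (Fin n) (Fin n) ℂ) := by ext i j; rfl
        have h2 : (Matrix.of fun i j => (⟨_, (hme h).2 i j⟩ : R)).map f
            = (((h : GL (Fin n) ℂ)⁻¹ : GL (Fin n) ℂ) : Matrix (Fin n) (Fin n) ℂ) := by
          ext i j; rfl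
        rw [Matrix.map_mul, h1, h2, Matrix.map_one f (map_zero f) (map_one f),
          ← Units.val_mul, inv_mul_cancel, Units.val_one] }
  have humap : ∀ h : H, (u h).val.map f = ((h : GL (Fin n) ℂ) : Matrix (Fin n) (Fin n) ℂ) :=
    fun h => by ext i j; rfl
  let ρ : H →* (Matrix (Fin n) (Fin n) R)ˣ := MonoidHom.mk' u <| by
    intro h1 h2
    apply Units.ext
    apply hMinj
    rw [humap, Units.val_mul, Matrix.map_mul, humap, humap]
    push_cast
    rfl
  -- a nonzero entry of g - 1
  have hgm : ∃ i j, ((g : GL (Fin n) ℂ) : Matrix (Fin n) (Fin n) ℂ) i j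
      ≠ (1 : Matrix (Fin n) (Fin n) ℂ) i j := by
    by_contra hc
    push_neg at hc
    apply hg
    have h1 : ((g : GL (Fin n) ℂ) : Matrix (Fin n) (Fin n) ℂ) = 1 := by ext i j; exact hc i j
    have h2 : (g : GL (Fin n) ℂ) = 1 := Units.ext (by simpa using h1)
    exact Subtype.ext (by simpa using h2)
  obtain ⟨i, j, hij⟩ := hgm
  set x : R := (u g).val i j - (1 : Matrix (Fin n) (Fin n) R) i j with hx
  have hone : f ((1 : Matrix (Fin n) (Fin n) R) i j) = (1 : Matrix (Fin n) (Fin n) ℂ) i j := by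
    simp only [Matrix.one_apply, apply_ite f, f.map_one, f.map_zero]
  have hxne : x ≠ 0 := by
    intro h0
    apply hij
    have : f ((u g).val i j) = f ((1 : Matrix (Fin n) (Fin n) R) i j) := by
      rw [← sub_eq_zero, ← f.map_sub, ← hx, h0, f.map_zero]
    rw [hone] at this
    rw [← this]
    exact (congrArg (fun M => M i j) (humap g)).symm
  obtain ⟨m, hmmax, hxm, hfin⟩ := exists_maximal_finite_quotient R x hxne
  let q := Ideal.Quotient.mk m
  let η : H →* (Matrix (Fin n) (Fin n) (R ⧸ m))ˣ :=
    (Units.map (RingHom.mapMatrix q).toMonoidHom).comp ρ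
  haveI : Finite (R ⧸ m) := hfin
  refine ⟨(Matrix (Fin n) (Fin n) (R ⧸ m))ˣ, inferInstance, inferInstance, η, ?_⟩
  intro h1
  apply hxm
  have hval : ((u g).val).map q = (1 : Matrix (Fin n) (Fin n) (R ⧸ m)) := by
    have := congrArg Units.val h1
    simpa [η, ρ, RingHom.mapMatrix_apply] using this
  have hentry : q ((u g).val i j) = q ((1 : Matrix (Fin n) (Fin n) R) i j) := by
    have h2 := congrArg (fun M => M i j) hval
    simp only [Matrix.map_apply] at h2
    rw [h2]
    simp only [Matrix.one_apply]
    split <;> simp [q]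
  have : q x = 0 := by rw [hx, q.map_sub, hentry, sub_self]
  exact (Ideal.Quotient.eq_zero_iff_mem).mp this
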